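/- arXiv:1207.4552 — 2 statements merged into one kernel-verified Lean document; each statement's English description precedes it below -/
import Mathlib

section
/- Let 0 < ε ≤ r, A ∈ ℝ^{n×n}, B ∈ ℝ^{n×m}, k ∈ ℝ^{m×n}, let d : [0,∞) → [−1,1] be measurable, and let (x, u) be a solution of the closed-loop system. Define the predictor state p(t) := e^{Ar} x(t) + ∫_t^{t+r} e^{A(t+r−s)} B u(s−r) ds for t ≥ 0. Then for all t ≥ r the state admits the inverse representation x(t) = e^{−Ar} p(t) − ∫_t^{t+r} e^{A(t−s)} B k p(s−r) ds. -/
open MeasureTheory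

set_option maxHeartbeats 1000000

/-- Matrix-vector multiplication between Euclidean spaces. -/
noncomputable def mv {n m : ℕ} (A : Matrix (Fin n) (Fin m) ℝ)
    (x : EuclideanSpace ℝ (Fin m)) : EuclideanSpace ℝ (Fin n) :=
  Matrix.toEuclideanLin A x

/-- `mexp A t = exp (t A)`, the matrix exponential. -/
noncomputable def mexp {n : ℕ} (A : Matrix (Fin n) (Fin n) ℝ) (t : ℝ) :
    Matrix (Fin n) (Fin n) ℝ :=
  NormedSpace.exp (t • A)

lemma mv_add {n m : ℕ} (M : Matrix (Fin n) (Fin m) ℝ) (a b : EuclideanSpace ℝ (Fin m)) :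
    mv M (a + b) = mv M a + mv M b :=
  map_add (Matrix.toEuclideanLin M) a b

lemma mv_mv {n m l : ℕ} (M : Matrix (Fin n) (Fin m) ℝ) (N : Matrix (Fin m) (Fin l) ℝ)
    (v : EuclideanSpace ℝ (Fin l)) : mv M (mv N v) = mv (M * N) v := by
  simp only [mv, Matrix.toEuclideanLin_apply, Equiv.apply_symm_apply, Matrix.mulVec_mulVec]

lemma mv_one {n : ℕ} (v : EuclideanSpace ℝ (Fin n)) :
    mv (1 : Matrix (Fin n) (Fin n) ℝ) v = v := by
  simp only [mv, Matrix.toEuclideanLin_apply, Matrix.one_mulVec, Equiv.symm_apply_apply]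

lemma mexp_mul {n : ℕ} (A : Matrix (Fin n) (Fin n) ℝ) (a b : ℝ) :
    mexp A a * mexp A b = mexp A (a + b) := by
  unfold mexp
  rw [add_smul]
  exact (Matrix.exp_add_of_commute _ _ (((Commute.refl A).smul_left a).smul_right b)).symm

lemma mexp_zero {n : ℕ} (A : Matrix (Fin n) (Fin n) ℝ) : mexp A 0 = 1 := by
  simp [mexp, NormedSpace.exp_zero]

lemma mexp_cont {n : ℕ} (A : Matrix (Fin n) (Fin n) ℝ) :
    Continuous fun t : ℝ => mexp A t := by
  letI := Matrix.linftyOpNormedRing (α := ℝ) (n := Fin n)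
  letI := Matrix.linftyOpNormedAlgebra (α := ℝ) (n := Fin n) (R := ℝ)
  letI := Matrix.linftyOpNormedAlgebra (α := ℝ) (n := Fin n) (R := ℚ)
  haveI : CompleteSpace (Matrix (Fin n) (Fin n) ℝ) := FiniteDimensional.complete ℝ _
  exact (NormedSpace.exp_continuous (𝔸 := Matrix (Fin n) (Fin n) ℝ)).comp (continuous_id.smul continuous_const)

lemma mv_contOn {n m : ℕ} {F : ℝ → Matrix (Fin n) (Fin m) ℝ} {g : ℝ → EuclideanSpace ℝ (Fin m)}
    {s : Set ℝ} (hF : ContinuousOn F s) (hg : ContinuousOn g s) :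
    ContinuousOn (fun t => mv (F t) (g t)) s := by
  simp only [mv, Matrix.toEuclideanLin_apply]
  refine ContinuousOn.comp (PiLp.continuous_toLp 2 (fun _ : Fin n => ℝ)).continuousOn
    ?_ (Set.mapsTo_univ _ _)
  refine continuousOn_pi.2 fun i => ?_
  simp only [Matrix.mulVec, dotProduct]
  refine continuousOn_finset_sum _ fun j _ => ContinuousOn.mul ?_ ?_
  · exact ((continuous_apply j).comp (continuous_apply i)).comp_continuousOn hF
  · exact ((continuous_apply j).comp (PiLp.continuous_ofLp 2 (fun _ : Fin m => ℝ))).comp_continuousOn hg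

lemma mv_cont2 {n m : ℕ} : Continuous (fun q : Matrix (Fin n) (Fin m) ℝ × EuclideanSpace ℝ (Fin m) =>
    mv q.1 q.2) := by
  simp only [mv, Matrix.toEuclideanLin_apply]
  refine Continuous.comp (PiLp.continuous_toLp 2 (fun _ : Fin n => ℝ)) ?_
  refine continuous_pi fun i => ?_
  simp only [Matrix.mulVec, dotProduct]
  refine continuous_finset_sum _ fun j _ => Continuous.mul ?_ ?_
  · exact (continuous_apply j).comp ((continuous_apply i).comp continuous_fst)
  · exact (continuous_apply j).comp
      ((PiLp.continuous_ofLp 2 (fun _ : Fin m => ℝ)).comp continuous_snd)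

/-- `mv M` as a continuous linear map. -/
noncomputable def mvCLM {n m : ℕ} (M : Matrix (Fin n) (Fin m) ℝ) :
    EuclideanSpace ℝ (Fin m) →L[ℝ] EuclideanSpace ℝ (Fin n) :=
  LinearMap.toContinuousLinearMap (Matrix.toEuclideanLin M)

lemma mvCLM_apply {n m : ℕ} (M : Matrix (Fin n) (Fin m) ℝ) (v : EuclideanSpace ℝ (Fin m)) :
    mvCLM M v = mv M v := rfl

lemma mv_cont {n m : ℕ} (M : Matrix (Fin n) (Fin m) ℝ) : Continuous (mv M) := by
  have := (mvCLM M).continuous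
  exact this

theorem stmt_8 (n m : ℕ) (A : Matrix (Fin n) (Fin n) ℝ)
    (B : Matrix (Fin n) (Fin m) ℝ) (k : Matrix (Fin m) (Fin n) ℝ)
    (r ε : ℝ) (hε : 0 < ε) (hεr : ε ≤ r)
    (d : ℝ → ℝ) (hd : Measurable d) (hd1 : ∀ t, 0 ≤ t → d t ∈ Set.Icc (-1 : ℝ) 1)
    (x : ℝ → EuclideanSpace ℝ (Fin n)) (u : ℝ → EuclideanSpace ℝ (Fin m))
    (hxc : ContinuousOn x (Set.Ici 0))
    (huc : ContinuousOn u (Set.Ici (-(r + ε))))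
    (hplant : ∀ t : ℝ, 0 ≤ t →
      x t = x 0 + ∫ s in (0 : ℝ)..t, (mv A (x s) + mv B (u (s - r - ε * d s))))
    (hfb : ∀ t : ℝ, 0 ≤ t →
      u t = mv k (mv (mexp A r) (x t)) +
        mv k (∫ s in t..(t + r), mv (mexp A (t + r - s)) (mv B (u (s - r)))))
    -- the predictor state
    (p : ℝ → EuclideanSpace ℝ (Fin n))
    (hp : ∀ t : ℝ, 0 ≤ t →
      p t = mv (mexp A r) (x t) +
        ∫ s in t..(t + r), mv (mexp A (t + r - s)) (mv B (u (s - r)))) :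
    -- inverse representation of the state
    ∀ t : ℝ, r ≤ t →
      x t = mv (mexp A (-r)) (p t) -
        ∫ s in t..(t + r), mv (mexp A (t - s)) (mv B (mv k (p (s - r)))) := by
  have hr : 0 < r := lt_of_lt_of_le hε hεr
  -- u τ = k p τ for τ ≥ 0
  have hu : ∀ τ : ℝ, 0 ≤ τ → u τ = mv k (p τ) := by
    intro τ hτ
    rw [hfb τ hτ, hp τ hτ, mv_add]
  intro t ht
  have ht0 : 0 ≤ t := le_trans hr.le ht
  have htt : t ≤ t + r := by linarith
  have huIcc : Set.uIcc t (t + r) = Set.Icc t (t + r) := Set.uIcc_of_le htt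
  -- interval integrability of the integrand in hp
  have hfi : IntervalIntegrable
      (fun s => mv (mexp A (t + r - s)) (mv B (u (s - r)))) volume t (t + r) := by
    apply ContinuousOn.intervalIntegrable
    have h1 : Continuous fun s : ℝ => mexp A (t + r - s) :=
      (mexp_cont A).comp ((continuous_const (y := t + r)).sub continuous_id)
    have h2 : ContinuousOn (fun s : ℝ => mv B (u (s - r))) (Set.uIcc t (t + r)) := by
      refine (mv_cont B).comp_continuousOn ?_
      refine huc.comp ((continuous_id.sub continuous_const).continuousOn) ?_
      intro s hs
      rw [huIcc] at hs
      have : t ≤ s := hs.1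
      simp only [Set.mem_Ici]
      nlinarith [hε.le]
    exact mv_contOn h1.continuousOn h2
  have key : mv (mexp A (-r)) (p t) =
      x t + ∫ s in t..(t + r), mv (mexp A (t - s)) (mv B (u (s - r))) := by
    rw [hp t ht0, mv_add]
    congr 1
    · rw [mv_mv, mexp_mul]
      norm_num [mexp_zero, mv_one]
    · rw [← mvCLM_apply, ← ContinuousLinearMap.intervalIntegral_comp_comm _ hfi]
      refine intervalIntegral.integral_congr fun s hs => ?_
      rw [mvCLM_apply, mv_mv, mexp_mul]
      norm_num [show -r + (t + r - s) = t - s by ring]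
  have hcongr : (∫ s in t..(t + r), mv (mexp A (t - s)) (mv B (mv k (p (s - r))))) =
      ∫ s in t..(t + r), mv (mexp A (t - s)) (mv B (u (s - r))) := by
    refine intervalIntegral.integral_congr fun s hs => ?_
    rw [huIcc] at hs
    rw [hu (s - r) (by linarith [hs.1])]
  rw [key, hcongr]
  abel
end

section
/- Let A, C ∈ ℝ^{n×n}, r ≥ ε ≥ 0, let d, q : [0,∞) → [−1,1] be measurable, let x be a solution of system (2.12), and define v(t) := x(t−r) − x(t−r−εd(t)) for t ≥ 0. Then for almost every t ≥ r with d(t) ≤ 0, the identity −v(t) = (exp(Aε|d(t)|) − I) x(t−r) − ∫_{t−r}^{t−r−εd(t)} exp(A(t−r−εd(t)−s)) q(s) C v(s) ds holds. -/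
open MeasureTheory

/-- The continuous linear map on Euclidean space associated to a square matrix. -/
noncomputable def clm {n : ℕ} (M : Matrix (Fin n) (Fin n) ℝ) :
    EuclideanSpace ℝ (Fin n) →L[ℝ] EuclideanSpace ℝ (Fin n) :=
  Matrix.toEuclideanCLM (𝕜 := ℝ) M

lemma mv_eq_clm {n : ℕ} (M : Matrix (Fin n) (Fin n) ℝ) (z : EuclideanSpace ℝ (Fin n)) :
    mv M z = clm M z := rfl

lemma clm_continuous {n : ℕ} : Continuous (clm (n := n)) := by
  let φ : Matrix (Fin n) (Fin n) ℝ →ₗ[ℝ]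
      (EuclideanSpace ℝ (Fin n) →L[ℝ] EuclideanSpace ℝ (Fin n)) :=
    { toFun := clm, map_add' := fun a b => map_add _ a b,
      map_smul' := fun c a => _root_.map_smul (Matrix.toEuclideanCLM (𝕜 := ℝ)) c a }
  exact φ.continuous_of_finiteDimensional

lemma clm_mexp {n : ℕ} (A : Matrix (Fin n) (Fin n) ℝ) (t : ℝ) :
    clm (mexp A t) = NormedSpace.exp (t • clm A) := by
  letI : SeminormedRing (Matrix (Fin n) (Fin n) ℝ) := Matrix.linftyOpSemiNormedRing
  letI : NormedRing (Matrix (Fin n) (Fin n) ℝ) := Matrix.linftyOpNormedRing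
  letI : NormedAlgebra ℝ (Matrix (Fin n) (Fin n) ℝ) := Matrix.linftyOpNormedAlgebra
  letI : NormedAlgebra ℚ (Matrix (Fin n) (Fin n) ℝ) := .restrictScalars ℚ ℝ _
  letI : NormedAlgebra ℚ (EuclideanSpace ℝ (Fin n) →L[ℝ] EuclideanSpace ℝ (Fin n)) :=
    .restrictScalars ℚ ℝ _
  unfold clm mexp
  erw [NormedSpace.map_exp
    (𝔹 := EuclideanSpace ℝ (Fin n) →L[ℝ] EuclideanSpace ℝ (Fin n))
    (Matrix.toEuclideanCLM (𝕜 := ℝ)) clm_continuous,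
    _root_.map_smul]

set_option maxHeartbeats 1000000 in
theorem stmt_12 (n : ℕ) (A C : Matrix (Fin n) (Fin n) ℝ)
    (r ε : ℝ) (hε : 0 ≤ ε) (hεr : ε ≤ r)
    (d q : ℝ → ℝ) (hd : Measurable d) (hd1 : ∀ t, 0 ≤ t → d t ∈ Set.Icc (-1 : ℝ) 1)
    (hq : Measurable q) (hq1 : ∀ t, 0 ≤ t → q t ∈ Set.Icc (-1 : ℝ) 1)
    (x : ℝ → EuclideanSpace ℝ (Fin n))
    (hxc : ContinuousOn x (Set.Ici (-(r + ε))))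
    (hxode : ∀ t : ℝ, 0 ≤ t →
      x t = x 0 + ∫ s in (0 : ℝ)..t,
        (mv A (x s) + q s • mv C (x (s - r - ε * d s) - x (s - r))))
    (v : ℝ → EuclideanSpace ℝ (Fin n))
    (hv : ∀ t : ℝ, 0 ≤ t → v t = x (t - r) - x (t - r - ε * d t)) :
    ∀ᵐ t ∂(volume.restrict (Set.Ici r)), d t ≤ 0 →
      -v t = mv (mexp A (ε * |d t|) - 1) (x (t - r)) -
        ∫ s in (t - r)..(t - r - ε * d t),
          mv (mexp A (t - r - ε * d t - s)) (q s • mv C (v s)) := by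
  have hr0 : (0:ℝ) ≤ r := le_trans hε hεr
  -- the continuous extension of x to all of ℝ
  set y : ℝ → EuclideanSpace ℝ (Fin n) := fun u => x (max u (-(r+ε))) with hy_def
  have hy_cont : Continuous y :=
    hxc.comp_continuous (continuous_id.max continuous_const) (fun u => Set.mem_Ici.mpr (le_max_right _ _))
  have hyx : ∀ u : ℝ, -(r+ε) ≤ u → y u = x u := by
    intro u hu
    simp only [hy_def]
    rw [max_eq_left hu]
  -- the (extended) right-hand side of the ODE
  set h : ℝ → EuclideanSpace ℝ (Fin n) :=
    fun u => q u • clm C (y (u - r - ε * d u) - y (u - r)) with hh_def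
  set f : ℝ → EuclideanSpace ℝ (Fin n) := fun u => clm A (y u) + h u with hf_def
  have hy_meas : Measurable y := hy_cont.measurable
  have harg : Measurable fun u : ℝ => u - r - ε * d u :=
    (measurable_id.sub_const r).sub (hd.const_mul ε)
  have hh_meas : Measurable h := by
    apply hq.smul
    exact (clm C).continuous.measurable.comp
      ((hy_meas.comp harg).sub (hy_meas.comp (measurable_id.sub_const r)))
  have hf_meas : Measurable f := ((clm A).continuous.measurable.comp hy_meas).add hh_meas
  rw [MeasureTheory.ae_restrict_iff' measurableSet_Ici]
  refine MeasureTheory.ae_of_all _ fun t ht hdt => ?_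
  have htr : r ≤ t := ht
  set b := t - r - ε * d t with hb_def
  set a := t - r with ha_def
  have hεd : ε * d t ≤ 0 := mul_nonpos_iff.mpr (Or.inl ⟨hε, hdt⟩)
  have ha0 : 0 ≤ a := by simp only [ha_def]; linarith
  have hab : a ≤ b := by simp only [ha_def, hb_def]; linarith
  have hb0 : 0 ≤ b := le_trans ha0 hab
  -- bound on y over the relevant compact set
  obtain ⟨M, hM⟩ := (isCompact_Icc (a := -(r+ε)) (b := b)).exists_bound_of_continuousOn
    hy_cont.continuousOn
  have hM0 : 0 ≤ M := le_trans (norm_nonneg (y b)) (hM b ⟨by linarith, le_refl b⟩)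
  -- bounds on h and f
  have hhb : ∀ s ∈ Set.Icc (0:ℝ) b, ‖h s‖ ≤ ‖clm C‖ * (M + M) := by
    intro s hs
    obtain ⟨hs0, hsb⟩ := hs
    obtain ⟨hd1l, hd1r⟩ := hd1 s hs0
    obtain ⟨hq1l, hq1r⟩ := hq1 s hs0
    have hεd1 : ε * d s ≤ ε := by nlinarith
    have hεd2 : -ε ≤ ε * d s := by nlinarith
    have h2 : ‖y (s - r - ε * d s)‖ ≤ M := hM _ ⟨by linarith, by linarith⟩
    have h3 : ‖y (s - r)‖ ≤ M := hM _ ⟨by linarith, by linarith⟩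
    have h4 : ‖y (s - r - ε * d s) - y (s - r)‖ ≤ M + M :=
      le_trans (norm_sub_le _ _) (by linarith)
    calc ‖h s‖ = ‖q s‖ * ‖clm C (y (s - r - ε * d s) - y (s - r))‖ := norm_smul _ _
      _ ≤ 1 * (‖clm C‖ * (M + M)) := by
          apply mul_le_mul _ _ (norm_nonneg _) zero_le_one
          · rw [Real.norm_eq_abs]; exact abs_le.mpr ⟨hq1l, hq1r⟩
          · exact le_trans ((clm C).le_opNorm _)
              (mul_le_mul_of_nonneg_left h4 (norm_nonneg _))
      _ = ‖clm C‖ * (M + M) := one_mul _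
  have hfb : ∀ s ∈ Set.Icc (0:ℝ) b, ‖f s‖ ≤ ‖clm A‖ * M + ‖clm C‖ * (M + M) := by
    intro s hs
    have h1 : ‖y s‖ ≤ M := hM _ ⟨by linarith [hs.1], hs.2⟩
    calc ‖f s‖ ≤ ‖clm A (y s)‖ + ‖h s‖ := norm_add_le _ _
      _ ≤ ‖clm A‖ * M + ‖clm C‖ * (M + M) := by
          apply add_le_add _ (hhb s hs)
          exact le_trans ((clm A).le_opNorm _) (mul_le_mul_of_nonneg_left h1 (norm_nonneg _))
  set Cf : ℝ := ‖clm A‖ * M + ‖clm C‖ * (M + M) with hCf_def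
  have hCf0 : 0 ≤ Cf :=
    add_nonneg (mul_nonneg (norm_nonneg _) hM0)
      (mul_nonneg (norm_nonneg _) (by linarith))
  -- integrability of f on [0, b]
  haveI hfin : IsFiniteMeasure (volume.restrict (Set.Icc (0:ℝ) b)) :=
    ⟨by rw [Measure.restrict_apply_univ]; exact measure_Icc_lt_top⟩
  have hfI : IntegrableOn f (Set.Icc (0:ℝ) b) := by
    refine Integrable.mono' (integrable_const Cf) hf_meas.aestronglyMeasurable ?_
    exact (ae_restrict_iff' measurableSet_Icc).mpr (Filter.Eventually.of_forall hfb)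
  have hfint : ∀ c1 c2 : ℝ, 0 ≤ c1 → c1 ≤ c2 → c2 ≤ b → IntervalIntegrable f volume c1 c2 := by
    intro c1 c2 h1 h2 h3
    exact (hfI.mono_set (by rw [Set.uIcc_of_le h2]; exact Set.Icc_subset_Icc h1 h3)).intervalIntegrable
  -- integral form of the ODE with f
  have hxf : ∀ c : ℝ, 0 ≤ c → x c = x 0 + ∫ s in (0:ℝ)..c, f s := by
    intro c h0
    rw [hxode c h0]
    congr 1
    apply intervalIntegral.integral_congr
    intro s hs
    rw [Set.uIcc_of_le h0] at hs
    obtain ⟨hs0, hsc⟩ := hs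
    obtain ⟨hd1l, hd1r⟩ := hd1 s hs0
    have hεd1 : ε * d s ≤ ε := by nlinarith
    have hεd2 : -ε ≤ ε * d s := by nlinarith
    have h1 : y s = x s := hyx s (by linarith)
    have h2 : y (s - r) = x (s - r) := hyx _ (by linarith)
    have h3 : y (s - r - ε * d s) = x (s - r - ε * d s) := hyx _ (by linarith)
    simp only [hf_def, hh_def, mv_eq_clm, h1, h2, h3]
  have hyab : ∀ s, a ≤ s → s ≤ b → y s - y a = ∫ u in a..s, f u := by
    intro s has hsb
    have hs0 : (0:ℝ) ≤ s := le_trans ha0 has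
    have h1 := hxf s hs0
    have h2 := hxf a ha0
    have h3 : x s - x a = (∫ u in (0:ℝ)..s, f u) - ∫ u in (0:ℝ)..a, f u := by
      rw [h1, h2]; abel
    rw [hyx s (by linarith), hyx a (by linarith), h3,
      intervalIntegral.integral_interval_sub_left (hfint 0 s le_rfl hs0 hsb)
        (hfint 0 a le_rfl ha0 hab)]
  -- the exponential semigroup
  set eA : ℝ → (EuclideanSpace ℝ (Fin n) →L[ℝ] EuclideanSpace ℝ (Fin n)) :=
    fun τ => NormedSpace.exp (τ • clm A) with heA_def
  letI : NormedAlgebra ℚ (EuclideanSpace ℝ (Fin n) →L[ℝ] EuclideanSpace ℝ (Fin n)) :=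
    .restrictScalars ℚ ℝ _
  have heA_cont : Continuous eA :=
    NormedSpace.exp_continuous.comp (continuous_id.smul continuous_const)
  have heA0 : eA 0 = 1 := by
    show NormedSpace.exp ((0:ℝ) • clm A) = 1
    have : ((0:ℝ) • clm A) = 0 := zero_smul ℝ (clm A)
    rw [this, NormedSpace.exp_zero]
  set G : ℝ → (EuclideanSpace ℝ (Fin n) →L[ℝ] EuclideanSpace ℝ (Fin n)) :=
    fun s => clm A * eA (b - s) with hG_def
  have hGcont : Continuous G :=
    continuous_const.mul (heA_cont.comp (continuous_const.sub continuous_id))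
  have happly : ∀ {φ : ℝ → (EuclideanSpace ℝ (Fin n) →L[ℝ] EuclideanSpace ℝ (Fin n))}
      {ψ : ℝ → EuclideanSpace ℝ (Fin n)}, Continuous φ → Continuous ψ →
      Continuous fun s => φ s (ψ s) := fun hφ hψ =>
    isBoundedBilinearMap_apply.continuous.comp (hφ.prodMk hψ)
  -- fundamental theorem of calculus for the exponential
  have key : ∀ (u : ℝ) (w : EuclideanSpace ℝ (Fin n)),
      (∫ s in u..b, G s w) = eA (b - u) w - w := by
    intro u w
    have hder : ∀ s : ℝ, HasDerivAt (fun s' => eA (b - s') w) (-(G s w)) s := by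
      intro s
      have h1 : HasDerivAt (fun s' : ℝ => b - s') (-1 : ℝ) s := by
        simpa using (hasDerivAt_id s).const_sub b
      have h2 : HasDerivAt eA (clm A * eA (b - s)) (b - s) := by
        simpa [heA_def] using
          hasDerivAt_exp_smul_const' (𝕂 := ℝ) (clm A) (b - s)
      have h3 : HasDerivAt (fun s' => eA (b - s')) ((-1 : ℝ) • (clm A * eA (b - s))) s :=
        h2.scomp s h1
      have h4 := h3.clm_apply (hasDerivAt_const s w)
      simpa [hG_def] using h4
    have hcont : Continuous fun s => G s w := happly hGcont continuous_const
    have hFTC := intervalIntegral.integral_eq_sub_of_hasDerivAt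
      (f := fun s' => eA (b - s') w) (f' := fun s => -(G s w))
      (fun s _ => hder s) (hcont.neg.intervalIntegrable u b)
    rw [intervalIntegral.integral_neg] at hFTC
    have : (∫ s in u..b, G s w) = -(eA (b - b) w - eA (b - u) w) := by
      rw [← hFTC, neg_neg]
    rw [this, sub_self, heA0]
    simp
  -- Fubini setup
  set μ : Measure ℝ := volume.restrict (Set.Ioc a b) with hμ_def
  haveI : IsFiniteMeasure μ :=
    ⟨by rw [hμ_def, Measure.restrict_apply_univ]; exact measure_Ioc_lt_top⟩
  set Φ : ℝ → ℝ → EuclideanSpace ℝ (Fin n) :=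
    fun u s => if u < s then G s (f u) else 0 with hΦ_def
  have hΦmeas : Measurable (Function.uncurry Φ) := by
    have h1 : Measurable fun p : ℝ × ℝ => G p.2 (f p.1) :=
      isBoundedBilinearMap_apply.continuous.measurable.comp
        ((hGcont.measurable.comp measurable_snd).prodMk (hf_meas.comp measurable_fst))
    exact Measurable.ite (measurableSet_lt measurable_fst measurable_snd) h1 measurable_const
  obtain ⟨MG, hMG⟩ := (isCompact_Icc (a := a) (b := b)).exists_bound_of_continuousOn
    hGcont.continuousOn
  have hMG0 : 0 ≤ MG := le_trans (norm_nonneg (G a)) (hMG a ⟨le_rfl, hab⟩)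
  have hΦint : Integrable (Function.uncurry Φ) (μ.prod μ) := by
    refine Integrable.mono' (integrable_const (MG * Cf)) hΦmeas.aestronglyMeasurable ?_
    rw [hμ_def, Measure.prod_restrict]
    refine (ae_restrict_iff' (measurableSet_Ioc.prod measurableSet_Ioc)).mpr
      (Filter.Eventually.of_forall ?_)
    rintro ⟨u, s⟩ ⟨hu, hs⟩
    simp only [Function.uncurry, hΦ_def]
    split_ifs with hlt
    · calc ‖G s (f u)‖ ≤ ‖G s‖ * ‖f u‖ := (G s).le_opNorm _
        _ ≤ MG * Cf := mul_le_mul (hMG s ⟨hs.1.le, hs.2⟩)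
            (hfb u ⟨le_trans ha0 hu.1.le, hu.2⟩) (norm_nonneg _) hMG0
    · simpa using mul_nonneg hMG0 hCf0
  have hswap := integral_integral_swap hΦint
  -- inner integral computations
  have stepA : ∀ u ∈ Set.Ioc a b, (∫ s, Φ u s ∂μ) = eA (b - u) (f u) - f u := by
    intro u hu
    have e1 : (∫ s, Φ u s ∂μ) =
        ∫ s in Set.Ioc a b, (Set.Ioc u b).indicator (fun s => G s (f u)) s := by
      rw [hμ_def]
      apply setIntegral_congr_fun measurableSet_Ioc
      intro s hs
      simp only [hΦ_def, Set.indicator_apply, Set.mem_Ioc]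
      by_cases hlt : u < s
      · simp [hlt, hs.2]
      · simp [hlt]
    rw [e1, integral_indicator measurableSet_Ioc, Measure.restrict_restrict measurableSet_Ioc,
      Set.inter_eq_self_of_subset_left (Set.Ioc_subset_Ioc_left hu.1.le),
      ← intervalIntegral.integral_of_le hu.2, key u (f u)]
  have stepB : ∀ s ∈ Set.Ioc a b, (∫ u, Φ u s ∂μ) = G s (y s - y a) := by
    intro s hs
    have e1 : (∫ u, Φ u s ∂μ) =
        ∫ u in Set.Ioc a b, (Set.Iio s).indicator (fun u => G s (f u)) u := by
      rw [hμ_def]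
      apply setIntegral_congr_fun measurableSet_Ioc
      intro u _
      simp only [hΦ_def, Set.indicator_apply, Set.mem_Iio]
    have e2 : Set.Iio s ∩ Set.Ioc a b = Set.Ioo a s := by
      ext u
      simp only [Set.mem_inter_iff, Set.mem_Iio, Set.mem_Ioc, Set.mem_Ioo]
      constructor
      · rintro ⟨h1, h2, _⟩; exact ⟨h2, h1⟩
      · rintro ⟨h1, h2⟩; exact ⟨h2, h1, le_trans h2.le hs.2⟩
    rw [e1, integral_indicator measurableSet_Iio,
      Measure.restrict_restrict measurableSet_Iio, e2, ← integral_Ioc_eq_integral_Ioo]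
    have hint : IntegrableOn f (Set.Ioc a s) :=
      hfI.mono_set (fun u hu => ⟨le_trans ha0 hu.1.le, le_trans hu.2 hs.2⟩)
    rw [(G s).integral_comp_comm hint]
    congr 1
    rw [hyab s hs.1.le hs.2, intervalIntegral.integral_of_le hs.1.le]
  -- commutation of A with its exponential
  have hcomm : ∀ τ : ℝ, clm A * eA τ = eA τ * clm A := by
    intro τ
    have h1 := hasDerivAt_exp_smul_const (𝕂 := ℝ) (clm A) τ
    have h2 := hasDerivAt_exp_smul_const' (𝕂 := ℝ) (clm A) τ
    simpa [heA_def] using h2.unique h1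
  -- continuity of the various integrands
  have cont1 : Continuous fun s => eA (b - s) (clm A (y s)) :=
    happly (heA_cont.comp (continuous_const.sub continuous_id))
      ((clm A).continuous.comp hy_cont)
  have cont2 : Continuous fun s => G s (y a) := happly hGcont continuous_const
  -- the main Fubini identity
  have E1 : (∫ u in a..b, (eA (b - u) (f u) - f u)) =
      (∫ s in a..b, eA (b - s) (clm A (y s))) - (eA (b - a) (y a) - y a) := by
    rw [intervalIntegral.integral_of_le hab]
    calc ∫ u in Set.Ioc a b, (eA (b - u) (f u) - f u)
        = ∫ u, (∫ s, Φ u s ∂μ) ∂μ := by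
          rw [hμ_def]
          exact (setIntegral_congr_fun measurableSet_Ioc fun u hu => stepA u hu).symm
      _ = ∫ s, (∫ u, Φ u s ∂μ) ∂μ := hswap
      _ = ∫ s in Set.Ioc a b, G s (y s - y a) := by
          rw [hμ_def]
          exact setIntegral_congr_fun measurableSet_Ioc fun s hs => stepB s hs
      _ = ∫ s in a..b, G s (y s - y a) := (intervalIntegral.integral_of_le hab).symm
      _ = ∫ s in a..b, (eA (b - s) (clm A (y s)) - G s (y a)) := by
          apply intervalIntegral.integral_congr
          intro s _
          show G s (y s - y a) = eA (b - s) (clm A (y s)) - G s (y a)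
          rw [map_sub]
          congr 1
          simp only [hG_def, hcomm (b - s), ContinuousLinearMap.mul_apply]
      _ = (∫ s in a..b, eA (b - s) (clm A (y s))) - ∫ s in a..b, G s (y a) :=
          intervalIntegral.integral_sub (cont1.intervalIntegrable a b)
            (cont2.intervalIntegrable a b)
      _ = _ := by rw [key a (y a)]
  -- integrability of the exponential-weighted integrands
  obtain ⟨ME, hME⟩ := (isCompact_Icc (a := a) (b := b)).exists_bound_of_continuousOn
    (heA_cont.comp (continuous_const.sub continuous_id)).continuousOn
  have hEf : IntervalIntegrable (fun s => eA (b - s) (f s)) volume a b := by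
    rw [intervalIntegrable_iff_integrableOn_Ioc_of_le hab]
    refine Integrable.mono' (μ := volume.restrict (Set.Ioc a b))
      (integrable_const (ME * Cf)) ?_ ?_
    · exact (isBoundedBilinearMap_apply.continuous.measurable.comp
        (((heA_cont.comp (continuous_const.sub continuous_id)).measurable).prodMk
          hf_meas)).aestronglyMeasurable
    · refine (ae_restrict_iff' measurableSet_Ioc).mpr (Filter.Eventually.of_forall ?_)
      intro s hs
      calc ‖eA (b - s) (f s)‖ ≤ ‖eA (b - s)‖ * ‖f s‖ := (eA (b - s)).le_opNorm _
        _ ≤ ME * Cf := mul_le_mul (hME s ⟨hs.1.le, hs.2⟩)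
            (hfb s ⟨le_trans ha0 hs.1.le, hs.2⟩) (norm_nonneg _)
            (le_trans (norm_nonneg _) (hME a ⟨le_rfl, hab⟩))
  have hEhint : IntervalIntegrable (fun s => eA (b - s) (h s)) volume a b := by
    have e : (fun s => eA (b - s) (h s)) =
        fun s => eA (b - s) (f s) - eA (b - s) (clm A (y s)) := by
      funext s
      simp only [hf_def, map_add]
      abel
    rw [e]
    exact hEf.sub (cont1.intervalIntegrable a b)
  -- conclusion of the variation-of-constants formula
  have hIEh : (∫ s in a..b, eA (b - s) (h s)) = y b - eA (b - a) (y a) := by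
    have h1 : (∫ u in a..b, (eA (b - u) (f u) - f u)) =
        (∫ u in a..b, eA (b - u) (f u)) - ∫ u in a..b, f u :=
      intervalIntegral.integral_sub hEf (hfint a b ha0 hab le_rfl)
    have h2 : (∫ u in a..b, eA (b - u) (f u)) =
        (∫ u in a..b, eA (b - u) (clm A (y u))) + ∫ u in a..b, eA (b - u) (h u) := by
      rw [← intervalIntegral.integral_add (cont1.intervalIntegrable a b) hEhint]
      apply intervalIntegral.integral_congr
      intro s _
      simp only [hf_def, map_add]
    have h3 := hyab b hab le_rfl
    have h4 := E1
    rw [h1, h2, ← h3] at h4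
    calc (∫ s in a..b, eA (b - s) (h s))
        = ((∫ u in a..b, eA (b - u) (clm A (y u))) + (∫ s in a..b, eA (b - s) (h s))
            - (y b - y a)) - (∫ u in a..b, eA (b - u) (clm A (y u))) + (y b - y a)
            - (eA (b - a) (y a) - y a) + (eA (b - a) (y a) - y a) := by abel
      _ = y b - eA (b - a) (y a) := by rw [h4]; abel
  -- final assembly
  have ht0 : (0:ℝ) ≤ t := le_trans hr0 htr
  have hya : y a = x a := hyx a (by linarith)
  have hyb : y b = x b := hyx b (by linarith)
  have habs : ε * |d t| = b - a := by
    rw [abs_of_nonpos hdt]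
    simp only [ha_def, hb_def]
    ring
  have hgoal1 : mv (mexp A (ε * |d t|) - 1) (x a) = eA (b - a) (x a) - x a := by
    rw [habs, mv_eq_clm]
    show (Matrix.toEuclideanCLM (𝕜 := ℝ) (mexp A (b - a) - 1)) (x a) = _
    rw [map_sub, map_one]
    have : Matrix.toEuclideanCLM (𝕜 := ℝ) (mexp A (b - a)) = eA (b - a) := clm_mexp A (b - a)
    rw [this]
    simp
  have hgoal2 : (∫ s in a..b, mv (mexp A (b - s)) (q s • mv C (v s))) =
      - ∫ s in a..b, eA (b - s) (h s) := by
    rw [← intervalIntegral.integral_neg]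
    apply intervalIntegral.integral_congr
    intro s hs
    rw [Set.uIcc_of_le hab] at hs
    have hs0 : (0:ℝ) ≤ s := le_trans ha0 hs.1
    obtain ⟨hd1l, hd1r⟩ := hd1 s hs0
    have hεd1 : ε * d s ≤ ε := by nlinarith
    have hεd2 : -ε ≤ ε * d s := by nlinarith
    have hvs : v s = x (s - r) - x (s - r - ε * d s) := hv s hs0
    have h2 : y (s - r) = x (s - r) := hyx _ (by linarith)
    have h3 : y (s - r - ε * d s) = x (s - r - ε * d s) := hyx _ (by linarith)
    show mv (mexp A (b - s)) (q s • mv C (v s)) = -(eA (b - s) (h s))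
    rw [mv_eq_clm, clm_mexp]
    show eA (b - s) (q s • mv C (v s)) = -(eA (b - s) (h s))
    rw [← map_neg (eA (b - s))]
    congr 1
    simp only [hh_def, mv_eq_clm, hvs, h2, h3]
    rw [← smul_neg]
    congr 1
    rw [← map_neg (clm C)]
    congr 1
    abel
  rw [hv t ht0]
  show -(x a - x b) = mv (mexp A (ε * |d t|) - 1) (x a) -
    ∫ s in a..b, mv (mexp A (b - s)) (q s • mv C (v s))
  rw [hgoal1, hgoal2, hIEh, hya, hyb]
  abel
end
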